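/- Let G be an undirected weighted connected graph with incidence matrix B ∈ ℝ^{n×m} and diagonal weight matrix 𝒜 ∈ ℝ^{m×m} with positive diagonal, let D ∈ ℝ^{m×m} be a positive definite diagonal matrix, and let 𝒫_D = I_m − D𝒜Bᵀ(B D𝒜 Bᵀ)†B be the D-weighted cycle projection. Then: (i) 𝒫_D is idempotent; (ii) its eigenvalues are 0 and 1 with algebraic (and geometric) multiplicities n−1 and m−n+1, respectively; (iii) Ker(𝒫_D D𝒜) = Img(Bᵀ). -/

import Mathlib

open scoped BigOperators
open Real Matrix

noncomputable section

/-- Counterclockwise difference on the circle: the representative of `α - β` in `[-π, π)`. -/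
def dcc (α β : Real.Angle) : ℝ := -((β - α).toReal)

/-- An oriented (multi)graph on node set `Fin n` with edge set `Fin m`;
each edge has a source and a target (sink) node. -/
structure OGraph (n m : ℕ) where
  src : Fin m → Fin n
  tgt : Fin m → Fin n
  noLoop : ∀ e, src e ≠ tgt e

namespace OGraph

variable {n m : ℕ}

/-- Incidence matrix `B`: entry `+1` at the sink (target) of an edge, `-1` at its source. -/
def inc (G : OGraph n m) : Matrix (Fin n) (Fin m) ℝ :=
  Matrix.of fun k e => if k = G.tgt e then (1 : ℝ) else if k = G.src e then -1 else 0

/-- Two nodes are adjacent if some edge joins them. -/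
def adjRel (G : OGraph n m) (i j : Fin n) : Prop :=
  ∃ e, (G.src e = i ∧ G.tgt e = j) ∨ (G.src e = j ∧ G.tgt e = i)

/-- The (undirected) graph is connected. -/
def Connected (G : OGraph n m) : Prop :=
  ∀ i j : Fin n, Relation.ReflTransGen G.adjRel i j

/-- The vector `(Bᵀ θ)` of counterclockwise differences along the oriented edges. -/
def edgeDiff (G : OGraph n m) (θ : Fin n → Real.Angle) : Fin m → ℝ :=
  fun e => dcc (θ (G.tgt e)) (θ (G.src e))

/-- Membership in the punctured `n`-torus: all edge differences have geodesic length `< π`. -/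
def Punctured (G : OGraph n m) (θ : Fin n → Real.Angle) : Prop :=
  ∀ e, |G.edgeDiff θ e| < π

/-- A cycle in the graph: a cyclically ordered sequence of `k + 3 ≥ 3` distinct nodes,
any two consecutive ones joined by an edge, traversed positively or negatively. -/
structure Cycle (G : OGraph n m) where
  k : ℕ
  vert : Fin (k + 3) → Fin n
  vertInj : Function.Injective vert
  edge : Fin (k + 3) → Fin m
  dir : Fin (k + 3) → Bool
  pos_compat : ∀ i, dir i = true → G.tgt (edge i) = vert i ∧ G.src (edge i) = vert (i + 1)
  neg_compat : ∀ i, dir i = false → G.src (edge i) = vert i ∧ G.tgt (edge i) = vert (i + 1)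

namespace Cycle

variable {G : OGraph n m}

/-- The number of nodes of the cycle. -/
def len (σ : G.Cycle) : ℕ := σ.k + 3

/-- Signed cycle vector `v_σ ∈ {-1,0,1}^m`. -/
def sgnVec (σ : G.Cycle) : Fin m → ℝ := fun e =>
  ∑ i : Fin (σ.k + 3), if σ.edge i = e then (if σ.dir i then (1 : ℝ) else -1) else 0

/-- Winding number of `θ` along the cycle `σ`. -/
def winding (σ : G.Cycle) (θ : Fin n → Real.Angle) : ℝ :=
  (1 / (2 * π)) * ∑ i : Fin (σ.k + 3), dcc (θ (σ.vert i)) (θ (σ.vert (i + 1)))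

end Cycle

/-- A family of cycles is a cycle basis if the signed cycle vectors form a basis
of the cycle space `Ker B`. -/
def IsCycleBasis (G : OGraph n m) (c : Fin (m + 1 - n) → G.Cycle) : Prop :=
  LinearIndependent ℝ (fun i => (c i).sgnVec) ∧
    Submodule.span ℝ (Set.range fun i => (c i).sgnVec) = LinearMap.ker G.inc.mulVecLin

/-- Cycle–edge matrix `C_Σ`, whose rows are the signed cycle vectors. -/
def cycMat (G : OGraph n m) (c : Fin (m + 1 - n) → G.Cycle) :
    Matrix (Fin (m + 1 - n)) (Fin m) ℝ :=
  Matrix.of fun i e => (c i).sgnVec e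

/-- Winding map along a family of cycles. -/
def windingMap (G : OGraph n m) (c : Fin (m + 1 - n) → G.Cycle)
    (θ : Fin n → Real.Angle) : Fin (m + 1 - n) → ℝ :=
  fun i => (c i).winding θ

/-- Image of the winding map over the punctured torus. -/
def windingImage (G : OGraph n m) (c : Fin (m + 1 - n) → G.Cycle) :
    Set (Fin (m + 1 - n) → ℝ) :=
  {u | ∃ θ, G.Punctured θ ∧ G.windingMap c θ = u}

/-- The `u`-winding cell `Ω^G_u = w_Σ⁻¹(u)`. -/
def windingCell (G : OGraph n m) (c : Fin (m + 1 - n) → G.Cycle)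
    (u : Fin (m + 1 - n) → ℝ) : Set (Fin n → Real.Angle) :=
  {θ | G.Punctured θ ∧ G.windingMap c θ = u}

end OGraph

/-- `(f, θ)` is a solution of the flow network problem for `(G, {h_e}, p, γ)`. -/
def IsFlowSol {n m : ℕ} (G : OGraph n m) (a : Fin m → ℝ) (h : Fin m → ℝ → ℝ)
    (p : Fin n → ℝ) (γ : ℝ) (f : Fin m → ℝ) (θ : Fin n → Real.Angle) : Prop :=
  G.inc.mulVec f = p ∧ (∀ e, f e = a e * h e (G.edgeDiff θ e)) ∧
    ∀ e, |G.edgeDiff θ e| ≤ γ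

/-- A flow function: continuously differentiable, `2π`-periodic, odd. -/
def IsFlowFun (h : ℝ → ℝ) : Prop :=
  ContDiff ℝ 1 h ∧ Function.Periodic h (2 * π) ∧ ∀ x, h (-x) = -h x

/-- Monotone on a set: strictly increasing or strictly decreasing. -/
def StrictMonoOrAntiOn (h : ℝ → ℝ) (s : Set ℝ) : Prop :=
  StrictMonoOn h s ∨ StrictAntiOn h s

/-- `ψ` is obtained from `θ` by a rigid rotation `rot_s`, `s ∈ [-π, π)`. -/
def RotEquiv {n : ℕ} (θ ψ : Fin n → Real.Angle) : Prop :=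
  ∃ s ∈ Set.Ico (-π) π, ∀ i, ψ i = θ i + (s : Real.Angle)

/-- `N` is the Moore–Penrose pseudoinverse of `M`. -/
def IsMoorePenrose {k l : ℕ} (M : Matrix (Fin k) (Fin l) ℝ)
    (N : Matrix (Fin l) (Fin k) ℝ) : Prop :=
  M * N * M = M ∧ N * M * N = N ∧ (M * N)ᵀ = M * N ∧ (N * M)ᵀ = N * M

/-- `D`-weighted norm `‖v‖_D = ‖D^{1/2} v‖₂` for a positive diagonal weight `d`. -/
def wNorm {k : ℕ} (d v : Fin k → ℝ) : ℝ := Real.sqrt (∑ e, d e * v e ^ 2)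

/-- `∞`-norm of a matrix: maximum absolute row sum. -/
def matInfNorm {k l : ℕ} (M : Matrix (Fin k) (Fin l) ℝ) : ℝ := ⨆ i, ∑ j, |M i j|

/-- The extended flow function `h_γ` (one scalar component). -/
def extFlow (h : ℝ → ℝ) (γ : ℝ) : ℝ → ℝ := fun y =>
  if γ ≤ y then deriv h γ * (y - γ) + h γ
  else if y ≤ -γ then deriv h γ * (y + γ) + h (-γ)
  else h y

/-- The vector `h_γ^{-1}(𝒜^{-1} f)`. -/
def hGammaInv {m : ℕ} (h : Fin m → ℝ → ℝ) (γ : ℝ) (a f : Fin m → ℝ) : Fin m → ℝ :=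
  fun e => Function.invFun (extFlow (h e) γ) (f e / a e)

/-- `(L_min)_{ee} = min_{y ∈ [-γ,γ]} h_e'(y)`. -/
def lminOf {m : ℕ} (h : Fin m → ℝ → ℝ) (γ : ℝ) : Fin m → ℝ :=
  fun e => sInf (deriv (h e) '' Set.Icc (-γ) γ)

/-- `(L_max)_{ee} = max_{y ∈ [-γ,γ]} h_e'(y)`. -/
def lmaxOf {m : ℕ} (h : Fin m → ℝ → ℝ) (γ : ℝ) : Fin m → ℝ :=
  fun e => sSup (deriv (h e) '' Set.Icc (-γ) γ)

/-- The `D`-weighted cycle projection `𝒫_D = I - D𝒜Bᵀ(B D𝒜 Bᵀ)† B`, where `N`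
stands for the pseudoinverse `(B D𝒜 Bᵀ)†`. -/
def cycProj {n m : ℕ} (G : OGraph n m) (a d : Fin m → ℝ)
    (N : Matrix (Fin n) (Fin n) ℝ) : Matrix (Fin m) (Fin m) ℝ :=
  1 - Matrix.diagonal d * Matrix.diagonal a * G.incᵀ * N * G.inc

/-- The `u`-winding fixed-point map `T_u`. -/
def Tmap {n m : ℕ} (G : OGraph n m) (a : Fin m → ℝ) (h : Fin m → ℝ → ℝ) (γ : ℝ)
    (N : Matrix (Fin n) (Fin n) ℝ) (Cdag : Matrix (Fin m) (Fin (m + 1 - n)) ℝ)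
    (u : Fin (m + 1 - n) → ℝ) (f : Fin m → ℝ) : Fin m → ℝ :=
  f - (cycProj G a (lminOf h γ) N).mulVec
    ((Matrix.diagonal (lminOf h γ) * Matrix.diagonal a).mulVec
      (hGammaInv h γ a f - (2 * π) • Cdag.mulVec u))

/-- The `u`-winding balance equation. -/
def WindingBalance {n m : ℕ} (G : OGraph n m) (a : Fin m → ℝ) (h : Fin m → ℝ → ℝ)
    (p : Fin n → ℝ) (γ : ℝ) (N : Matrix (Fin n) (Fin n) ℝ)
    (Cdag : Matrix (Fin m) (Fin (m + 1 - n)) ℝ) (u : Fin (m + 1 - n) → ℝ)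
    (f : Fin m → ℝ) : Prop :=
  G.inc.mulVec f = p ∧
    (cycProj G a (lminOf h γ) N).mulVec
      ((Matrix.diagonal (lminOf h γ) * Matrix.diagonal a).mulVec
        (hGammaInv h γ a f - (2 * π) • Cdag.mulVec u)) = 0 ∧
    ∀ e, |f e| ≤ a e * |h e γ|


section CPaux

open Matrix

/-- Uniqueness of the Moore–Penrose pseudoinverse. -/
theorem mp_unique {k l : ℕ} {M : Matrix (Fin k) (Fin l) ℝ} {P Q : Matrix (Fin l) (Fin k) ℝ}
    (hP : IsMoorePenrose M P) (hQ : IsMoorePenrose M Q) : P = Q := by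
  obtain ⟨hP1, hP2, hP3, hP4⟩ := hP
  obtain ⟨hQ1, hQ2, hQ3, hQ4⟩ := hQ
  have e1 : M * P = M * Q := by
    calc M * P = (M * P)ᵀ := hP3.symm
    _ = Pᵀ * Mᵀ := Matrix.transpose_mul _ _
    _ = Pᵀ * (M * Q * M)ᵀ := by rw [hQ1]
    _ = Pᵀ * (Mᵀ * (M * Q)ᵀ) := by rw [Matrix.transpose_mul]
    _ = Pᵀ * (Mᵀ * (M * Q)) := by rw [hQ3]
    _ = Pᵀ * Mᵀ * (M * Q) := by rw [Matrix.mul_assoc]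
    _ = (M * P)ᵀ * (M * Q) := by rw [Matrix.transpose_mul]
    _ = M * P * (M * Q) := by rw [hP3]
    _ = M * P * M * Q := by rw [← Matrix.mul_assoc]
    _ = M * Q := by rw [hP1]
  have e2 : P * M = Q * M := by
    calc P * M = (P * M)ᵀ := hP4.symm
    _ = Mᵀ * Pᵀ := Matrix.transpose_mul _ _
    _ = (M * (Q * M))ᵀ * Pᵀ := by rw [← Matrix.mul_assoc, hQ1]
    _ = (Q * M)ᵀ * Mᵀ * Pᵀ := by rw [Matrix.transpose_mul]
    _ = Q * M * Mᵀ * Pᵀ := by rw [hQ4]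
    _ = Q * M * (Mᵀ * Pᵀ) := by rw [Matrix.mul_assoc]
    _ = Q * M * (P * M)ᵀ := by rw [Matrix.transpose_mul]
    _ = Q * M * (P * M) := by rw [hP4]
    _ = Q * (M * (P * M)) := by rw [Matrix.mul_assoc]
    _ = Q * (M * P * M) := by rw [Matrix.mul_assoc M P M]
    _ = Q * M := by rw [hP1]
  calc P = P * M * P := hP2.symm
  _ = Q * M * P := by rw [e2]
  _ = Q * (M * P) := by rw [Matrix.mul_assoc]
  _ = Q * (M * Q) := by rw [e1]
  _ = Q * M * Q := by rw [Matrix.mul_assoc]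
  _ = Q := hQ2

/-- The Moore–Penrose pseudoinverse of the transpose is the transpose of the pseudoinverse. -/
theorem mp_transpose {k l : ℕ} {M : Matrix (Fin k) (Fin l) ℝ} {P : Matrix (Fin l) (Fin k) ℝ}
    (hP : IsMoorePenrose M P) : IsMoorePenrose Mᵀ Pᵀ := by
  obtain ⟨hP1, hP2, hP3, hP4⟩ := hP
  refine ⟨?_, ?_, ?_, ?_⟩
  · rw [← Matrix.transpose_mul, ← Matrix.transpose_mul, ← Matrix.mul_assoc, hP1]
  · rw [← Matrix.transpose_mul, ← Matrix.transpose_mul, ← Matrix.mul_assoc, hP2]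
  · rw [← Matrix.transpose_mul, Matrix.transpose_transpose]
    exact hP4.symm
  · rw [← Matrix.transpose_mul, Matrix.transpose_transpose]
    exact hP3.symm

/-- If `S W Sᵀ = 0` for a positive diagonal `W`, then `S = 0`. -/
theorem wcancel {k l : ℕ} {w : Fin l → ℝ} (hw : ∀ e, 0 < w e)
    {S : Matrix (Fin k) (Fin l) ℝ} (h : S * Matrix.diagonal w * Sᵀ = 0) : S = 0 := by
  ext i e
  have hii := congrFun (congrFun h i) i
  rw [Matrix.mul_apply] at hii
  simp only [Matrix.mul_diagonal, Matrix.transpose_apply, Matrix.zero_apply] at hii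
  have hnn : ∀ x ∈ Finset.univ, (0:ℝ) ≤ S i x * w x * S i x := by
    intro x _
    have h1 : S i x * w x * S i x = w x * (S i x * S i x) := by ring
    rw [h1]
    exact mul_nonneg (hw x).le (mul_self_nonneg _)
  have he := (Finset.sum_eq_zero_iff_of_nonneg hnn).mp hii e (Finset.mem_univ e)
  rcases mul_eq_zero.mp he with h1 | h1
  · rcases mul_eq_zero.mp h1 with h2 | h2
    · simpa using h2
    · exact absurd h2 (hw e).ne'
  · simpa using h1

end CPaux

set_option maxHeartbeats 1600000 in
set_option synthInstance.maxHeartbeats 400000 in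
/-- Properties of the `D`-weighted cycle projection. -/
theorem cycle_projection_properties {n m : ℕ} (hn : 0 < n) (G : OGraph n m)
    (hconn : G.Connected)
    (a : Fin m → ℝ) (ha : ∀ e, 0 < a e)
    (d : Fin m → ℝ) (hd : ∀ e, 0 < d e)
    (N : Matrix (Fin n) (Fin n) ℝ)
    (hN : IsMoorePenrose
      (G.inc * (Matrix.diagonal d * Matrix.diagonal a) * G.incᵀ) N) :
    cycProj G a d N * cycProj G a d N = cycProj G a d N ∧
    (∀ μ : ℝ, Module.End.HasEigenvalue (cycProj G a d N).mulVecLin μ → μ = 0 ∨ μ = 1) ∧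
    Module.finrank ℝ (Module.End.eigenspace (cycProj G a d N).mulVecLin 0) = n - 1 ∧
    Module.finrank ℝ (Module.End.eigenspace (cycProj G a d N).mulVecLin 1) = m + 1 - n ∧
    (cycProj G a d N).charpoly =
      Polynomial.X ^ (n - 1) * (Polynomial.X - 1) ^ (m + 1 - n) ∧
    LinearMap.ker ((cycProj G a d N * (Matrix.diagonal d * Matrix.diagonal a)).mulVecLin) =
      LinearMap.range G.incᵀ.mulVecLin := by
  classical
  obtain ⟨h1, h2, h3, h4⟩ := hN
  set w : Fin m → ℝ := d * a with hwdef
  have hw : ∀ e, 0 < w e := fun e => mul_pos (hd e) (ha e)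
  have hW : Matrix.diagonal d * Matrix.diagonal a = Matrix.diagonal w :=
    Matrix.diagonal_mul_diagonal d a
  set B : Matrix (Fin n) (Fin m) ℝ := G.inc with hBdef
  rw [hW] at h1 h2 h3 h4
  set L : Matrix (Fin n) (Fin n) ℝ := B * Matrix.diagonal w * Bᵀ with hLdef
  have h1' : L * (N * L) = L := by rw [← Matrix.mul_assoc]; exact h1
  have hLt : Lᵀ = L := by
    rw [hLdef, Matrix.transpose_mul, Matrix.transpose_mul, Matrix.transpose_transpose,
      Matrix.diagonal_transpose, Matrix.mul_assoc]
  have hNt : Nᵀ = N := by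
    have hmp : IsMoorePenrose L Nᵀ := by
      have := mp_transpose ⟨h1, h2, h3, h4⟩
      rwa [hLt] at this
    exact mp_unique hmp ⟨h1, h2, h3, h4⟩
  have t2 : B * Matrix.diagonal w * (Bᵀ * (N * L)) = L := by
    rw [← Matrix.mul_assoc (B * Matrix.diagonal w) Bᵀ (N * L), ← hLdef,
      ← Matrix.mul_assoc L N L, h1]
  have t3 : L * (N * B) * Matrix.diagonal w * Bᵀ = L := by
    rw [Matrix.mul_assoc L (N * B) (Matrix.diagonal w),
      Matrix.mul_assoc N B (Matrix.diagonal w),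
      Matrix.mul_assoc L (N * (B * Matrix.diagonal w)) Bᵀ,
      Matrix.mul_assoc N (B * Matrix.diagonal w) Bᵀ,
      ← hLdef, h1']
  have t4 : L * (N * B) * Matrix.diagonal w * (Bᵀ * (N * L)) = L := by
    rw [Matrix.mul_assoc L (N * B) (Matrix.diagonal w),
      Matrix.mul_assoc N B (Matrix.diagonal w),
      Matrix.mul_assoc L (N * (B * Matrix.diagonal w)) (Bᵀ * (N * L)),
      Matrix.mul_assoc N (B * Matrix.diagonal w) (Bᵀ * (N * L)),
      t2, h1']
  have hSzero : (B - L * (N * B)) * Matrix.diagonal w * (B - L * (N * B))ᵀ = 0 := by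
    have ht : (B - L * (N * B))ᵀ = Bᵀ - Bᵀ * (N * L) := by
      rw [Matrix.transpose_sub]
      congr 1
      rw [Matrix.transpose_mul, Matrix.transpose_mul, hNt, hLt, Matrix.mul_assoc]
    rw [ht, Matrix.sub_mul, Matrix.sub_mul, Matrix.mul_sub, Matrix.mul_sub,
      ← hLdef, t2, t3, t4]
    simp
  have hLNB : L * (N * B) = B := by
    have h0 := wcancel hw hSzero
    have h0' : B = L * (N * B) := sub_eq_zero.mp h0
    exact h0'.symm
  have hBNL : Bᵀ * (N * L) = Bᵀ := by
    have hc := congrArg Matrix.transpose hLNB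
    rwa [Matrix.transpose_mul, Matrix.transpose_mul, hNt, hLt, Matrix.mul_assoc] at hc
  set Q : Matrix (Fin m) (Fin m) ℝ := Matrix.diagonal w * Bᵀ * N * B with hQdef
  have hP : cycProj G a d N = 1 - Q := by
    rw [hQdef]
    unfold cycProj
    rw [hW, hBdef]
  have hBQ : B * Q = B := by
    rw [hQdef, ← Matrix.mul_assoc B (Matrix.diagonal w * Bᵀ * N) B,
      ← Matrix.mul_assoc B (Matrix.diagonal w * Bᵀ) N,
      ← Matrix.mul_assoc B (Matrix.diagonal w) Bᵀ, ← hLdef,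
      Matrix.mul_assoc L N B, hLNB]
  have hQQ : Q * Q = Q := by
    have hstep : Q * Q = Matrix.diagonal w * Bᵀ * N * (B * Q) := by
      rw [hQdef, Matrix.mul_assoc (Matrix.diagonal w * Bᵀ * N) B
        (Matrix.diagonal w * Bᵀ * N * B)]
    rw [hstep, hBQ, ← hQdef]
  have hQDBt : Q * (Matrix.diagonal w * Bᵀ) = Matrix.diagonal w * Bᵀ := by
    rw [hQdef,
      Matrix.mul_assoc (Matrix.diagonal w * Bᵀ * N) B (Matrix.diagonal w * Bᵀ),
      ← Matrix.mul_assoc B (Matrix.diagonal w) Bᵀ, ← hLdef,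
      Matrix.mul_assoc (Matrix.diagonal w) Bᵀ N,
      Matrix.mul_assoc (Matrix.diagonal w) (Bᵀ * N) L,
      Matrix.mul_assoc Bᵀ N L, hBNL]
  have c1 : cycProj G a d N * cycProj G a d N = cycProj G a d N := by
    have hexp : (1 - Q) * (1 - Q) = 1 - Q - (Q - Q * Q) := by noncomm_ring
    rw [hP, hexp, hQQ, sub_self, sub_zero]
  -- vector-level facts
  have hfq : ∀ x, (cycProj G a d N).mulVecLin x = x - Q.mulVec x := by
    intro x
    rw [Matrix.mulVecLin_apply, hP, Matrix.sub_mulVec, Matrix.one_mulVec]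
  have hff : ∀ x, (cycProj G a d N).mulVecLin ((cycProj G a d N).mulVecLin x)
      = (cycProj G a d N).mulVecLin x := by
    intro x
    rw [Matrix.mulVecLin_apply, Matrix.mulVecLin_apply, Matrix.mulVec_mulVec, c1]
  have hDinj : ∀ u : Fin m → ℝ, (Matrix.diagonal w).mulVec u = 0 → u = 0 := by
    intro u hu
    funext e
    have h0 := congrFun hu e
    rw [Matrix.mulVec_diagonal] at h0
    rcases mul_eq_zero.mp h0 with h' | h'
    · exact absurd h' (hw e).ne'
    · exact h'
  -- conjunct 2 : eigenvalues
  have c2 : ∀ μ : ℝ, Module.End.HasEigenvalue (cycProj G a d N).mulVecLin μ → μ = 0 ∨ μ = 1 := by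
    intro μ hμ
    obtain ⟨x, hx⟩ := hμ.exists_hasEigenvector
    have h0 : (cycProj G a d N).mulVecLin x = μ • x := hx.apply_eq_smul
    have h5 : (μ * μ) • x = μ • x := by
      have h6 := hff x
      rwa [h0, LinearMap.map_smul, h0, smul_smul] at h6
    have h6 : (μ * μ - μ) • x = 0 := by rw [sub_smul, h5, sub_self]
    rcases smul_eq_zero.mp h6 with h | h
    · have h7 : μ * (μ - 1) = 0 := by ring_nf; ring_nf at h; linarith
      rcases mul_eq_zero.mp h7 with h' | h'
      · exact Or.inl h'
      · exact Or.inr (by linarith)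
    · exact absurd h hx.right
  -- range of Q
  have hrangeQ : LinearMap.range Q.mulVecLin
      = LinearMap.range (Matrix.diagonal w * Bᵀ).mulVecLin := by
    apply le_antisymm
    · rintro x₀ ⟨y, rfl⟩
      refine ⟨(N * B).mulVec y, ?_⟩
      rw [Matrix.mulVecLin_apply, Matrix.mulVecLin_apply, Matrix.mulVec_mulVec]
      congr 1
      rw [hQdef]
      simp only [Matrix.mul_assoc]
    · rintro x₀ ⟨y, rfl⟩
      refine ⟨(Matrix.diagonal w * Bᵀ).mulVec y, ?_⟩
      rw [Matrix.mulVecLin_apply, Matrix.mulVecLin_apply, Matrix.mulVec_mulVec, hQDBt]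
  -- incidence matrix transpose applied to a vector
  have hBtApp : ∀ (x : Fin n → ℝ) (e : Fin m),
      Bᵀ.mulVec x e = x (G.tgt e) - x (G.src e) := by
    intro x e
    have hterm : ∀ k, Bᵀ e k * x k
        = (if k = G.tgt e then x k else 0) - (if k = G.src e then x k else 0) := by
      intro k
      rw [hBdef]
      simp only [Matrix.transpose_apply, OGraph.inc, Matrix.of_apply]
      by_cases hk1 : k = G.tgt e
      · have hk2 : k ≠ G.src e := fun hk => G.noLoop e (hk.symm.trans hk1)
        subst hk1
        simp [hk2]
      · by_cases hk2 : k = G.src e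
        · subst hk2
          simp [hk1]
        · simp [hk1, hk2]
    have hsum : Bᵀ.mulVec x e = ∑ k, Bᵀ e k * x k := by
      simp [Matrix.mulVec, dotProduct]
    rw [hsum, Finset.sum_congr rfl fun k _ => hterm k, Finset.sum_sub_distrib,
      Finset.sum_ite_eq' Finset.univ (G.tgt e) x,
      Finset.sum_ite_eq' Finset.univ (G.src e) x]
    simp
  -- kernel of Bᵀ
  have hkerBt : LinearMap.ker Bᵀ.mulVecLin
      = Submodule.span ℝ {(fun _ => (1:ℝ) : Fin n → ℝ)} := by
    apply le_antisymm
    · intro x hx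
      rw [LinearMap.mem_ker] at hx
      have hedge : ∀ e, x (G.tgt e) = x (G.src e) := by
        intro e
        have h0 : Bᵀ.mulVec x e = 0 := by
          rw [show Bᵀ.mulVec x = 0 from hx]
          rfl
        rw [hBtApp x e] at h0
        exact sub_eq_zero.mp h0
      have hadj : ∀ i j, G.adjRel i j → x i = x j := by
        rintro i j ⟨e, ⟨hs, ht⟩ | ⟨hs, ht⟩⟩
        · rw [← hs, ← ht]; exact (hedge e).symm
        · rw [← hs, ← ht]; exact hedge e
      have hall : ∀ i j, x i = x j := by
        intro i j
        induction hconn i j with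
        | refl => rfl
        | tail _ ha' ih => exact ih.trans (hadj _ _ ha')
      rw [Submodule.mem_span_singleton]
      refine ⟨x ⟨0, hn⟩, ?_⟩
      funext j
      simp only [Pi.smul_apply, smul_eq_mul, mul_one]
      exact hall _ j
    · rw [Submodule.span_le, Set.singleton_subset_iff, SetLike.mem_coe, LinearMap.mem_ker]
      show Bᵀ.mulVec (fun _ => (1:ℝ)) = 0
      funext e
      rw [hBtApp]
      simp
  have hker1 : Module.finrank ℝ (LinearMap.ker Bᵀ.mulVecLin) = 1 := by
    rw [hkerBt]
    apply finrank_span_singleton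
    intro hcon
    have h0 := congrFun hcon ⟨0, hn⟩
    simp at h0
  have hrn : Module.finrank ℝ (LinearMap.range Bᵀ.mulVecLin) + 1 = n := by
    have h0 := LinearMap.finrank_range_add_finrank_ker Bᵀ.mulVecLin
    rwa [hker1, Module.finrank_fin_fun] at h0
  have hrBt : Module.finrank ℝ (LinearMap.range Bᵀ.mulVecLin) = n - 1 := by omega
  -- diagonal w is invertible
  have hWunit : Matrix.diagonal w * Matrix.diagonal (fun e => (w e)⁻¹) = 1 := by
    rw [Matrix.diagonal_mul_diagonal]
    have hone : (fun i => w i * (w i)⁻¹) = fun _ : Fin m => (1:ℝ) :=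
      funext fun e => mul_inv_cancel₀ (hw e).ne'
    rw [hone, Matrix.diagonal_one]
  have hWunit' : Matrix.diagonal (fun e => (w e)⁻¹) * Matrix.diagonal w = 1 := by
    rw [Matrix.diagonal_mul_diagonal]
    have hone : (fun i => (w i)⁻¹ * w i) = fun _ : Fin m => (1:ℝ) :=
      funext fun e => inv_mul_cancel₀ (hw e).ne'
    rw [hone, Matrix.diagonal_one]
  let eD : (Fin m → ℝ) ≃ₗ[ℝ] (Fin m → ℝ) :=
    LinearEquiv.ofLinear (Matrix.diagonal w).mulVecLin
      (Matrix.diagonal fun e => (w e)⁻¹).mulVecLin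
      (by rw [← Matrix.mulVecLin_mul, hWunit, Matrix.mulVecLin_one])
      (by rw [← Matrix.mulVecLin_mul, hWunit', Matrix.mulVecLin_one])
  have hrDBt : Module.finrank ℝ (LinearMap.range (Matrix.diagonal w * Bᵀ).mulVecLin)
      = n - 1 := by
    rw [Matrix.mulVecLin_mul, LinearMap.range_comp]
    rw [show (Matrix.diagonal w).mulVecLin = (eD : (Fin m → ℝ) →ₗ[ℝ] (Fin m → ℝ)) from rfl]
    rw [LinearEquiv.finrank_map_eq]
    exact hrBt
  -- kernel of the projection = range of Q
  have hker_f : LinearMap.ker (cycProj G a d N).mulVecLin = LinearMap.range Q.mulVecLin := by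
    apply le_antisymm
    · intro x hx
      rw [LinearMap.mem_ker] at hx
      have h0 : x - Q.mulVec x = 0 := (hfq x).symm.trans hx
      refine ⟨x, ?_⟩
      rw [Matrix.mulVecLin_apply]
      exact (sub_eq_zero.mp h0).symm
    · rintro x₀ ⟨y, rfl⟩
      rw [LinearMap.mem_ker, hfq, Matrix.mulVecLin_apply, Matrix.mulVec_mulVec, hQQ,
        sub_self]
  have hfrk : Module.finrank ℝ (LinearMap.ker (cycProj G a d N).mulVecLin) = n - 1 := by
    rw [hker_f, hrangeQ]
    exact hrDBt
  have c3 : Module.finrank ℝ (Module.End.eigenspace (cycProj G a d N).mulVecLin 0)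
      = n - 1 := by
    rw [Module.End.eigenspace_zero]
    exact hfrk
  -- rank-nullity for Q
  have hrnQ := LinearMap.finrank_range_add_finrank_ker Q.mulVecLin
  rw [Module.finrank_fin_fun] at hrnQ
  have hrkQ : Module.finrank ℝ (LinearMap.range Q.mulVecLin) = n - 1 := by
    rw [hrangeQ]; exact hrDBt
  have hkQ : Module.finrank ℝ (LinearMap.ker Q.mulVecLin) = m + 1 - n := by omega
  have he1s : Module.End.eigenspace (cycProj G a d N).mulVecLin 1
      = LinearMap.ker Q.mulVecLin := by
    ext x
    rw [Module.End.mem_eigenspace_iff, LinearMap.mem_ker, one_smul, hfq,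
      Matrix.mulVecLin_apply]
    exact sub_eq_self
  have c4 : Module.finrank ℝ (Module.End.eigenspace (cycProj G a d N).mulVecLin 1)
      = m + 1 - n := by
    rw [he1s]; exact hkQ
  -- range of the projection
  have hrange_f : LinearMap.range (cycProj G a d N).mulVecLin
      = LinearMap.ker Q.mulVecLin := by
    apply le_antisymm
    · rintro x₀ ⟨y, rfl⟩
      rw [LinearMap.mem_ker]
      have h0 := hff y
      rw [hfq ((cycProj G a d N).mulVecLin y)] at h0
      have h5 := sub_eq_self.mp h0
      rw [Matrix.mulVecLin_apply]
      exact h5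
    · intro x hx
      rw [LinearMap.mem_ker, Matrix.mulVecLin_apply] at hx
      exact ⟨x, by rw [hfq, hx, sub_zero]⟩
  -- characteristic polynomial via an adapted basis
  have hcompl : IsCompl (LinearMap.ker (cycProj G a d N).mulVecLin)
      (LinearMap.range (cycProj G a d N).mulVecLin) := by
    constructor
    · rw [Submodule.disjoint_def]
      intro x h0 h5
      rw [LinearMap.mem_ker] at h0
      rw [hrange_f, LinearMap.mem_ker, Matrix.mulVecLin_apply] at h5
      have h6 := hfq x
      rw [h0, h5, sub_zero] at h6
      exact h6.symm
    · rw [codisjoint_iff, eq_top_iff]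
      intro x _
      have hx1 : x - (cycProj G a d N).mulVecLin x
          ∈ LinearMap.ker (cycProj G a d N).mulVecLin := by
        rw [LinearMap.mem_ker, map_sub, hff, sub_self]
      have hx2 : (cycProj G a d N).mulVecLin x
          ∈ LinearMap.range (cycProj G a d N).mulVecLin := ⟨x, rfl⟩
      have h0 := Submodule.add_mem_sup hx1 hx2
      rwa [sub_add_cancel] at h0
  haveI hdec0 : DecidableEq
      (Module.Free.ChooseBasisIndex ℝ (LinearMap.ker (cycProj G a d N).mulVecLin)) :=
    Classical.decEq _
  haveI hdec1 : DecidableEq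
      (Module.Free.ChooseBasisIndex ℝ (LinearMap.range (cycProj G a d N).mulVecLin)) :=
    Classical.decEq _
  let b0 := Module.Free.chooseBasis ℝ (LinearMap.ker (cycProj G a d N).mulVecLin)
  let b1 := Module.Free.chooseBasis ℝ (LinearMap.range (cycProj G a d N).mulVecLin)
  let bb := (b0.prod b1).map (Submodule.prodEquivOfIsCompl _ _ hcompl)
  have hbb0 : ∀ i, bb (Sum.inl i) = (b0 i : Fin m → ℝ) := by
    intro i
    rw [show bb (Sum.inl i)
        = Submodule.prodEquivOfIsCompl _ _ hcompl ((b0.prod b1) (Sum.inl i)) from rfl]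
    rw [Submodule.coe_prodEquivOfIsCompl', Module.Basis.prod_apply_inl_fst, Module.Basis.prod_apply_inl_snd]
    simp
  have hbb1 : ∀ i, bb (Sum.inr i) = (b1 i : Fin m → ℝ) := by
    intro i
    rw [show bb (Sum.inr i)
        = Submodule.prodEquivOfIsCompl _ _ hcompl ((b0.prod b1) (Sum.inr i)) from rfl]
    rw [Submodule.coe_prodEquivOfIsCompl', Module.Basis.prod_apply_inr_fst, Module.Basis.prod_apply_inr_snd]
    simp
  have hzero : ∀ i, (cycProj G a d N).mulVecLin ((b0 i : Fin m → ℝ)) = 0 :=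
    fun i => LinearMap.mem_ker.mp (b0 i).2
  have hfix : ∀ i, (cycProj G a d N).mulVecLin ((b1 i : Fin m → ℝ)) = (b1 i : Fin m → ℝ) := by
    intro i
    obtain ⟨y, hy⟩ := (b1 i).2
    rw [← hy]
    exact hff y
  let dg : (Module.Free.ChooseBasisIndex ℝ (LinearMap.ker (cycProj G a d N).mulVecLin) ⊕
      Module.Free.ChooseBasisIndex ℝ (LinearMap.range (cycProj G a d N).mulVecLin)) → ℝ :=
    Sum.elim (fun _ => (0:ℝ)) (fun _ => (1:ℝ))
  have hmat : LinearMap.toMatrix bb bb (cycProj G a d N).mulVecLin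
      = Matrix.diagonal dg := by
    ext i j
    rw [LinearMap.toMatrix_apply]
    cases j with
    | inl j0 =>
      rw [hbb0 j0, hzero j0, map_zero]
      by_cases hij : i = Sum.inl j0
      · subst hij; simp [Matrix.diagonal_apply, dg]
      · simp [Matrix.diagonal_apply_ne _ hij]
    | inr j1 =>
      rw [hbb1 j1, hfix j1, ← hbb1 j1, Module.Basis.repr_self, Finsupp.single_apply,
        Matrix.diagonal_apply]
      by_cases hij : i = Sum.inr j1
      · simp [hij, dg]
      · rw [if_neg (fun h => hij h.symm), if_neg hij]
  have hcard0 : Fintype.card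
      (Module.Free.ChooseBasisIndex ℝ (LinearMap.ker (cycProj G a d N).mulVecLin))
      = n - 1 := by
    rw [← Module.finrank_eq_card_chooseBasisIndex]
    exact hfrk
  have hcard1 : Fintype.card
      (Module.Free.ChooseBasisIndex ℝ (LinearMap.range (cycProj G a d N).mulVecLin))
      = m + 1 - n := by
    rw [← Module.finrank_eq_card_chooseBasisIndex, hrange_f]
    exact hkQ
  have c5 : (cycProj G a d N).charpoly
      = Polynomial.X ^ (n - 1) * (Polynomial.X - 1) ^ (m + 1 - n) := by
    have s1 : (cycProj G a d N).charpoly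
        = LinearMap.charpoly (cycProj G a d N).mulVecLin := by
      rw [← LinearMap.charpoly_toMatrix (cycProj G a d N).mulVecLin (Pi.basisFun ℝ (Fin m))]
      congr 1
      rw [LinearMap.toMatrix_eq_toMatrix', ← Matrix.toLin'_apply', LinearMap.toMatrix'_toLin']
    have s2 : LinearMap.charpoly (cycProj G a d N).mulVecLin
        = (Matrix.diagonal dg).charpoly := by
      rw [← LinearMap.charpoly_toMatrix (cycProj G a d N).mulVecLin bb, hmat]
    have hch : charmatrix (Matrix.diagonal dg)
        = Matrix.diagonal
          (fun i => (Polynomial.X : Polynomial ℝ)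
            - Polynomial.C (Sum.elim (fun _ => (0:ℝ)) (fun _ => (1:ℝ)) i)) := by
      ext i j
      by_cases hij : i = j
      · subst hij
        rw [charmatrix_apply_eq, Matrix.diagonal_apply_eq, Matrix.diagonal_apply_eq]
      · rw [charmatrix_apply_ne _ _ _ hij, Matrix.diagonal_apply_ne _ hij,
          Matrix.diagonal_apply_ne _ hij]
        simp
    have s3 : (Matrix.diagonal dg).charpoly
        = Polynomial.X ^ (n - 1) * (Polynomial.X - 1) ^ (m + 1 - n) := by
      rw [show (Matrix.diagonal dg).charpoly
          = (charmatrix (Matrix.diagonal dg)).det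
          from rfl]
      rw [hch, Matrix.det_diagonal, Fintype.prod_sum_type]
      simp only [dg, Sum.elim_inl, Sum.elim_inr, Polynomial.C_0, Polynomial.C_1, sub_zero]
      rw [Finset.prod_const, Finset.prod_const, Finset.card_univ, Finset.card_univ,
        hcard0, hcard1]
    rw [s1, s2, s3]
  -- conjunct 6
  have c6 : LinearMap.ker
        ((cycProj G a d N * (Matrix.diagonal d * Matrix.diagonal a)).mulVecLin)
      = LinearMap.range Bᵀ.mulVecLin := by
    apply le_antisymm
    · intro x hx
      rw [LinearMap.mem_ker, Matrix.mulVecLin_apply, hP, hW] at hx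
      have hfact : (1 - Q) * Matrix.diagonal w
          = Matrix.diagonal w
            - Matrix.diagonal w * (Bᵀ * (N * (B * Matrix.diagonal w))) := by
        rw [Matrix.sub_mul, Matrix.one_mul]
        congr 1
        rw [hQdef]
        simp only [Matrix.mul_assoc]
      rw [hfact, Matrix.sub_mulVec, ← Matrix.mulVec_mulVec
        (M := Matrix.diagonal w) (N := Bᵀ * (N * (B * Matrix.diagonal w))),
        ← Matrix.mulVec_sub] at hx
      have h0 := hDinj _ hx
      have hxT : x = (Bᵀ * (N * (B * Matrix.diagonal w))).mulVec x :=
        sub_eq_zero.mp h0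
      refine ⟨(N * (B * Matrix.diagonal w)).mulVec x, ?_⟩
      rw [Matrix.mulVecLin_apply, Matrix.mulVec_mulVec]
      exact hxT.symm
    · rintro x₀ ⟨y, rfl⟩
      rw [LinearMap.mem_ker, Matrix.mulVecLin_apply, Matrix.mulVecLin_apply,
        Matrix.mulVec_mulVec]
      have hz : cycProj G a d N * (Matrix.diagonal d * Matrix.diagonal a) * Bᵀ = 0 := by
        rw [hP, hW, Matrix.mul_assoc, Matrix.sub_mul, Matrix.one_mul, hQDBt, sub_self]
      rw [hz, Matrix.zero_mulVec]
  exact ⟨c1, c2, c3, c4, c5, c6⟩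


end
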